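/- Suppose that β, α, β′ and α′ are nonzero ordinals, and that there exists an injective function f : α′ → α such that, for every K ⊆ α of order type < β, the set f⁻¹(K) has order type < β′. Then every [β, α]-compact pair (X, τ) is [β′, α′]-compact. Moreover, if τ is closed under arbitrary unions, the same conclusion holds without assuming that f is injective. -/

import Mathlib

open Ordinal Set Cardinal

/-- The order type of a set of ordinals, under the induced order: the unique ordinal `o`
such that `S` with the induced order is order-isomorphic to `Set.Iio o`. -/
noncomputable def otype (S : Set Ordinal) : Ordinal :=
  sInf {o : Ordinal | Nonempty (S ≃o Set.Iio o)}

/-- `(X, τ)` is `[β, α]`-compact: every `α`-indexed cover of `X` by members of `τ`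
has a subcover indexed by a subset of `α` of order type `< β`. -/
def OrdCompact (β α : Ordinal) (X : Type*) (τ : Set (Set X)) : Prop :=
  ∀ O : Ordinal → Set X,
    (∀ δ < α, O δ ∈ τ) →
    (⋃ δ ∈ Set.Iio α, O δ) = Set.univ →
    ∃ H ⊆ Set.Iio α, otype H < β ∧ (⋃ δ ∈ H, O δ) = Set.univ

universe u v

/-- The order type of `S` as an ordinal in the next universe. -/
noncomputable def stype (S : Set Ordinal.{u}) : Ordinal.{u+1} :=
  Ordinal.type ((· < ·) : S → S → Prop)

lemma stype_Iio (o : Ordinal.{u}) : stype (Set.Iio o) = Ordinal.lift.{u+1} o := by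
  have iwo1 : IsWellOrder (Set.Iio o) (· < ·) := isWellOrder_lt
  have iwo2 : IsWellOrder o.ToType (· < ·) := isWellOrder_lt
  have h2 := (@Ordinal.lift_type_eq.{u+1, u, u+1} (Set.Iio o) o.ToType
    (· < ·) (· < ·) iwo1 iwo2).2 ⟨(ToType.mk (o := o)).toRelIsoLT⟩
  rw [Ordinal.lift_id, type_toType] at h2
  exact h2

lemma iso_iff {S : Set Ordinal.{u}} {o : Ordinal.{v}} :
    Nonempty (S ≃o Set.Iio o) ↔
      Ordinal.lift.{max (u+1) (v+1)} (stype S) = Ordinal.lift.{max (u+1) (v+1)} o := by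
  have iwo1 : IsWellOrder S (· < ·) := isWellOrder_lt
  have iwo2 : IsWellOrder (Set.Iio o) (· < ·) := isWellOrder_lt
  have key := @Ordinal.lift_type_eq.{u+1, v+1, max (u+1) (v+1)} S (Set.Iio o)
      (· < ·) (· < ·) iwo1 iwo2
  have hrw : Ordinal.lift.{max (u+1) (v+1), v+1} (stype (Set.Iio o)) =
      Ordinal.lift.{max (u+1) (v+1), v} o := by
    rw [stype_Iio, Ordinal.lift_lift]
  rw [show (Ordinal.type ((· < ·) : Set.Iio o → Set.Iio o → Prop)) = stype (Set.Iio o) from rfl,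
    show (Ordinal.type ((· < ·) : S → S → Prop)) = stype S from rfl, hrw] at key
  constructor
  · rintro ⟨e⟩
    exact key.2 ⟨e.toRelIsoLT⟩
  · intro h
    obtain ⟨e⟩ := key.1 h
    exact ⟨OrderIso.ofRelIsoLT e⟩

lemma iio_iso_unique {o o' : Ordinal.{v}} {S : Set Ordinal.{u}}
    (h1 : Nonempty (S ≃o Set.Iio o)) (h2 : Nonempty (S ≃o Set.Iio o')) : o = o' := by
  have hcomp : Nonempty ((Set.Iio o : Set Ordinal.{v}) ≃o (Set.Iio o' : Set Ordinal.{v})) :=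
    ⟨(Classical.choice h1).symm.trans (Classical.choice h2)⟩
  have key := iso_iff.{v,v}.1 hcomp
  rw [Ordinal.lift_id, stype_Iio] at key
  exact Ordinal.lift_inj.1 key

lemma otype_eq_of_iso {S : Set Ordinal.{u}} {o : Ordinal.{v}}
    (h : Nonempty (S ≃o Set.Iio o)) : otype.{u,v} S = o := by
  have hset : {o' : Ordinal.{v} | Nonempty (S ≃o Set.Iio o')} = {o} := by
    ext o'
    simp only [Set.mem_setOf_eq, Set.mem_singleton_iff]
    exact ⟨fun h' => iio_iso_unique h' h, fun h' => h' ▸ h⟩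
  rw [otype, hset, csInf_singleton]

lemma otype_eq_zero_of_no_iso {S : Set Ordinal.{u}}
    (h : ¬ ∃ o : Ordinal.{v}, Nonempty (S ≃o Set.Iio o)) : otype.{u,v} S = 0 := by
  have hset : {o' : Ordinal.{v} | Nonempty (S ≃o Set.Iio o')} = ∅ := by
    ext o'
    simp only [Set.mem_setOf_eq, Set.mem_empty_iff_false, iff_false]
    exact fun h' => h ⟨o', h'⟩
  rw [otype, hset, Ordinal.sInf_empty]

lemma stype_le_of_map {K H : Set Ordinal.{u}} (e : Ordinal.{u} → Ordinal.{u})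
    (he : ∀ k ∈ K, e k ∈ H) (hmono : ∀ k1 ∈ K, ∀ k2 ∈ K, k1 < k2 → e k1 < e k2) :
    stype K ≤ stype H := by
  have emb : ((· < ·) : K → K → Prop) ↪r ((· < ·) : H → H → Prop) := by
    refine (OrderEmbedding.ofStrictMono (fun k => (⟨e k.1, he k.1 k.2⟩ : H)) ?_).ltEmbedding
    intro a b hab
    exact hmono a.1 a.2 b.1 b.2 hab
  exact Ordinal.type_le_iff'.2 ⟨emb⟩

lemma rep_of_stype_le {K H : Set Ordinal.{u}} {o : Ordinal.{v}} (h : stype K ≤ stype H)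
    (hiso : Nonempty (H ≃o Set.Iio o)) :
    ∃ oK : Ordinal.{v}, Nonempty (K ≃o Set.Iio oK) ∧ oK ≤ o := by
  have hH := iso_iff.1 hiso
  have hle : Ordinal.lift.{max (u+1) (v+1)} (stype K) ≤
      Ordinal.lift.{max (u+1) (v+1)} o := by
    rw [← hH]
    exact Ordinal.lift_le.2 h
  obtain ⟨oK, hoK⟩ := Ordinal.mem_range_lift_of_le hle
  refine ⟨oK, iso_iff.2 hoK.symm, ?_⟩
  rw [← Ordinal.lift_le.{max (u+1) (v+1)}, hoK]
  exact hle

/-- Either `otype K ≤ otype H`, or both sides are degenerate, in the sense that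
`K ∪ H` has no order type in the target universe (so `otype (K ∪ H) = 0`). -/
lemma otype_cases {K H : Set Ordinal.{u}} (h : stype K ≤ stype H) :
    otype.{u,v} K ≤ otype.{u,v} H ∨ otype.{u,v} (K ∪ H) = 0 := by
  by_cases hrep : ∃ o : Ordinal.{v}, Nonempty (H ≃o Set.Iio o)
  · obtain ⟨oH, hiso⟩ := hrep
    obtain ⟨oK, hisoK, hle⟩ := rep_of_stype_le h hiso
    left
    rw [otype_eq_of_iso hisoK, otype_eq_of_iso hiso]
    exact hle
  · right
    apply otype_eq_zero_of_no_iso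
    rintro ⟨o, hiso⟩
    have hsub : stype H ≤ stype (K ∪ H) :=
      stype_le_of_map id (fun k hk => Set.mem_union_right _ hk) (fun _ _ _ _ h => h)
    obtain ⟨oH, hisoH, _⟩ := rep_of_stype_le hsub hiso
    exact hrep ⟨oH, hisoH⟩

open scoped Classical in
/-- The "round up to the nearest element of `I`" map (defaulting to `sInf I`). -/
noncomputable def vmap (I : Set Ordinal.{u}) (δ : Ordinal.{u}) : Ordinal.{u} :=
  if h : (I ∩ Set.Ici δ).Nonempty then sInf (I ∩ Set.Ici δ) else sInf I

lemma vmap_mem {I : Set Ordinal.{u}} (hI : I.Nonempty) (δ : Ordinal.{u}) : vmap I δ ∈ I := by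
  by_cases h : (I ∩ Set.Ici δ).Nonempty
  · rw [vmap, dif_pos h]; exact (csInf_mem h).1
  · rw [vmap, dif_neg h]; exact csInf_mem hI

lemma vmap_fixed {I : Set Ordinal.{u}} {δ : Ordinal.{u}} (hδ : δ ∈ I) : vmap I δ = δ := by
  have hne : (I ∩ Set.Ici δ).Nonempty := ⟨δ, hδ, le_refl δ⟩
  rw [vmap, dif_pos hne]
  exact le_antisymm (csInf_le' ⟨hδ, le_refl δ⟩) (le_csInf hne fun x hx => hx.2)

lemma vmap_mono {I : Set Ordinal.{u}} {δ1 δ2 : Ordinal.{u}} (h12 : δ1 ≤ δ2)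
    (h2 : (I ∩ Set.Ici δ2).Nonempty) : vmap I δ1 ≤ vmap I δ2 := by
  have h1 : (I ∩ Set.Ici δ1).Nonempty :=
    h2.mono (Set.inter_subset_inter_right _ (Set.Ici_subset_Ici.2 h12))
  rw [vmap, vmap, dif_pos h1, dif_pos h2]
  exact csInf_le_csInf (OrderBot.bddBelow _) h2
    (Set.inter_subset_inter_right _ (Set.Ici_subset_Ici.2 h12))

lemma sInf_le_vmap {I : Set Ordinal.{u}} (hI : I.Nonempty) (δ : Ordinal.{u}) :
    sInf I ≤ vmap I δ := csInf_le' (vmap_mem hI δ)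

/-- The key combinatorial fact: the image of a set of ordinals under `vmap I` has
order type at most that of the original set. -/
lemma stype_vmap_image_le {I : Set Ordinal.{u}} (hI : I.Nonempty) (H : Set Ordinal.{u}) :
    stype (vmap I '' H) ≤ stype H := by
  set v : Ordinal.{u} → Ordinal.{u} := vmap I with hv
  set D : Set Ordinal.{u} := {δ | (I ∩ Set.Ici δ).Nonempty} with hD
  have hDdc : ∀ {x y : Ordinal.{u}}, x ≤ y → y ∈ D → x ∈ D := by
    rintro x y hxy ⟨z, hz1, hz2⟩
    exact ⟨z, hz1, le_trans hxy hz2⟩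
  have hvmonoD : ∀ {δ1 δ2 : Ordinal.{u}}, δ1 ≤ δ2 → δ2 ∈ D → v δ1 ≤ v δ2 :=
    fun h12 h2 => vmap_mono h12 h2
  have hnotD : ∀ {δ : Ordinal.{u}}, δ ∉ D → v δ = sInf I := fun h => dif_neg h
  by_cases hHD : H ⊆ D
  · -- every element of H is dominated by some element of I
    set e : Ordinal.{u} → Ordinal.{u} := fun k => sInf {δ | δ ∈ H ∧ v δ = k} with he
    have hek : ∀ k ∈ v '' H, e k ∈ H ∧ v (e k) = k := by
      rintro k ⟨δ, hδ, rfl⟩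
      exact csInf_mem (⟨δ, hδ, rfl⟩ : {δ' | δ' ∈ H ∧ v δ' = v δ}.Nonempty)
    refine stype_le_of_map e (fun k hk => (hek k hk).1) ?_
    intro k1 hk1 k2 hk2 hlt
    by_contra hcon
    have h21 : e k2 ≤ e k1 := not_lt.1 hcon
    have := hvmonoD h21 (hHD (hek k1 hk1).1)
    rw [(hek k1 hk1).2, (hek k2 hk2).2] at this
    exact absurd hlt (not_lt.2 this)
  · -- some element of H is above every element of I
    obtain ⟨b0, hb0H, hb0D⟩ := not_subset.1 hHD
    have hpre : ∀ k ∈ v '' H, k ≠ sInf I → {δ | δ ∈ H ∧ δ ∈ D ∧ v δ = k}.Nonempty := by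
      rintro k ⟨δ, hδ, rfl⟩ hne
      by_cases hδD : δ ∈ D
      · exact ⟨δ, hδ, hδD, rfl⟩
      · exact absurd (hnotD hδD) hne
    set p : Ordinal.{u} → Ordinal.{u} := fun k => sInf {δ | δ ∈ H ∧ δ ∈ D ∧ v δ = k} with hp
    set e : Ordinal.{u} → Ordinal.{u} := fun k =>
      if k = sInf I then sInf H else sInf {δ | δ ∈ H ∧ p k < δ} with he
    have hpk : ∀ k ∈ v '' H, k ≠ sInf I → p k ∈ H ∧ p k ∈ D ∧ v (p k) = k :=
      fun k hk hne => csInf_mem (hpre k hk hne)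
    have hb0gt : ∀ k ∈ v '' H, k ≠ sInf I → p k < b0 := by
      intro k hk hne
      by_contra hcon
      exact hb0D (hDdc (not_lt.1 hcon) (hpk k hk hne).2.1)
    have hsucc : ∀ k ∈ v '' H, k ≠ sInf I →
        e k ∈ H ∧ p k < e k ∧ ∀ x ∈ H, p k < x → e k ≤ x := by
      intro k hk hne
      have hne2 : {δ | δ ∈ H ∧ p k < δ}.Nonempty := ⟨b0, hb0H, hb0gt k hk hne⟩
      have hmem := csInf_mem hne2
      rw [he]; simp only [if_neg hne]
      exact ⟨hmem.1, hmem.2, fun x hx1 hx2 => csInf_le' ⟨hx1, hx2⟩⟩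
    have heH : ∀ k ∈ v '' H, e k ∈ H := by
      intro k hk
      by_cases hne : k = sInf I
      · rw [he]; simp only [if_pos hne]
        exact csInf_mem ⟨b0, hb0H⟩
      · exact (hsucc k hk hne).1
    refine stype_le_of_map e heH ?_
    intro k1 hk1 k2 hk2 hlt
    have hk2ne : k2 ≠ sInf I := by
      intro hcon
      obtain ⟨δ1, hδ1, rfl⟩ := hk1
      exact absurd (hcon ▸ hlt) (not_lt.2 (sInf_le_vmap hI δ1))
    by_cases hk1ne : k1 = sInf I
    · have h1 : e k1 = sInf H := by rw [he]; simp only [if_pos hk1ne]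
      have h2 : sInf H ≤ p k2 := csInf_le' (hpk k2 hk2 hk2ne).1
      exact h1 ▸ lt_of_le_of_lt h2 (hsucc k2 hk2 hk2ne).2.1
    · have hplt : p k1 < p k2 := by
        by_contra hcon
        have := hvmonoD (not_lt.1 hcon) (hpk k1 hk1 hk1ne).2.1
        rw [(hpk k1 hk1 hk1ne).2.2, (hpk k2 hk2 hk2ne).2.2] at this
        exact absurd hlt (not_lt.2 this)
      have h1 : e k1 ≤ p k2 :=
        (hsucc k1 hk1 hk1ne).2.2 (p k2) (hpk k2 hk2 hk2ne).1 hplt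
      exact lt_of_le_of_lt h1 (hsucc k2 hk2 hk2ne).2.1

/-- Proposition 2.5: if there is a function `f : α' → α` such that preimages of sets of order
type `< β` have order type `< β'`, then `[β, α]`-compactness implies `[β', α']`-compactness,
provided either `f` is injective, or `τ` is closed under unions. -/
theorem ordCompact_transfer {β α β' α' : Ordinal}
    (hβ : β ≠ 0) (hα : α ≠ 0) (hβ' : β' ≠ 0) (hα' : α' ≠ 0)
    {X : Type*} {τ : Set (Set X)} {f : Ordinal → Ordinal}
    (hmaps : Set.MapsTo f (Set.Iio α') (Set.Iio α))
    (hpull : ∀ K ⊆ Set.Iio α, otype K < β → otype (Set.Iio α' ∩ f ⁻¹' K) < β') :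
    (Set.InjOn f (Set.Iio α') →
      OrdCompact β α X τ → OrdCompact β' α' X τ) ∧
    ((∀ S ⊆ τ, ⋃₀ S ∈ τ) →
      OrdCompact β α X τ → OrdCompact β' α' X τ) := by
  constructor
  · -- injective case
    intro hinj hcomp O' hO' hcov'
    have h0α' : (0 : Ordinal) < α' := pos_iff_ne_zero.2 hα'
    set I : Set Ordinal := f '' Set.Iio α' with hIdef
    have hI : I.Nonempty := ⟨f 0, 0, h0α', rfl⟩
    have hIsub : I ⊆ Set.Iio α := by
      rintro x ⟨δ', hδ', rfl⟩
      exact hmaps hδ'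
    have hex : ∀ δ, ∃ δ', δ' ∈ Set.Iio α' ∧ f δ' = vmap I δ := by
      intro δ
      obtain ⟨δ', hδ', hfδ'⟩ := vmap_mem hI δ
      exact ⟨δ', hδ', hfδ'⟩
    choose g hg1 hg2 using hex
    have hcover : (⋃ δ ∈ Set.Iio α, O' (g δ)) = Set.univ := by
      apply Set.eq_univ_of_univ_subset
      rw [← hcov']
      refine Set.iUnion₂_subset fun δ' hδ' => ?_
      have hgf : g (f δ') = δ' := by
        have h1 : f (g (f δ')) = f δ' := by
          rw [hg2 (f δ'), vmap_fixed (Set.mem_image_of_mem f hδ')]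
        exact hinj (hg1 (f δ')) hδ' h1
      have hsub : O' δ' ⊆ O' (g (f δ')) := by rw [hgf]
      exact hsub.trans (Set.subset_iUnion₂ (s := fun δ _ => O' (g δ)) (f δ') (hmaps hδ'))
    obtain ⟨H, hHsub, hHot, hHcov⟩ := hcomp (fun δ => O' (g δ))
      (fun δ _ => hO' (g δ) (hg1 δ)) hcover
    -- pick a suitable set K of indices below α
    obtain ⟨K, hK1, hK2, hK3⟩ :
        ∃ K, vmap I '' H ⊆ K ∧ K ⊆ Set.Iio α ∧ otype K < β := by
      have himsub : vmap I '' H ⊆ Set.Iio α := by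
        rintro k ⟨δ, _, rfl⟩
        exact hIsub (vmap_mem hI δ)
      rcases otype_cases (stype_vmap_image_le hI H) with hle | hzero
      · exact ⟨vmap I '' H, subset_rfl, himsub, lt_of_le_of_lt hle hHot⟩
      · refine ⟨vmap I '' H ∪ H, Set.subset_union_left, ?_, ?_⟩
        · exact Set.union_subset himsub hHsub
        · rw [hzero]
          exact pos_iff_ne_zero.2 hβ
    refine ⟨Set.Iio α' ∩ f ⁻¹' K, Set.inter_subset_left, hpull K hK2 hK3, ?_⟩
    apply Set.eq_univ_of_univ_subset
    rw [← hHcov]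
    refine Set.iUnion₂_subset fun δ hδ => ?_
    exact Set.subset_iUnion₂ (s := fun δ' _ => O' δ') (g δ)
      ⟨hg1 δ, by rw [Set.mem_preimage, hg2 δ]; exact hK1 (Set.mem_image_of_mem _ hδ)⟩
  · -- union-closed case
    intro hU hcomp O' hO' hcov'
    set O : Ordinal → Set X := fun δ => ⋃₀ {s | ∃ δ' ∈ Set.Iio α', f δ' = δ ∧ s = O' δ'} with hO
    have hcover : (⋃ δ ∈ Set.Iio α, O δ) = Set.univ := by
      apply Set.eq_univ_of_univ_subset
      rw [← hcov']
      refine Set.iUnion₂_subset fun δ' hδ' => ?_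
      have hsub : O' δ' ⊆ O (f δ') := fun x hx => ⟨O' δ', ⟨δ', hδ', rfl, rfl⟩, hx⟩
      exact hsub.trans (Set.subset_iUnion₂ (s := fun δ _ => O δ) (f δ') (hmaps hδ'))
    obtain ⟨H, hHsub, hHot, hHcov⟩ := hcomp O
      (fun δ _ => hU _ (by rintro s ⟨δ', hδ', _, rfl⟩; exact hO' δ' hδ')) hcover
    refine ⟨Set.Iio α' ∩ f ⁻¹' H, Set.inter_subset_left, hpull H hHsub hHot, ?_⟩
    apply Set.eq_univ_of_univ_subset
    rw [← hHcov]
    refine Set.iUnion₂_subset fun δ hδ => ?_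
    rintro x ⟨s, ⟨δ', hδ', hfδ', rfl⟩, hx⟩
    exact Set.mem_biUnion ⟨hδ', by rw [Set.mem_preimage, hfδ']; exact hδ⟩ hx
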